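/- Let G be a countably infinite group and let A ⊆ G be an anti-recurrence (AR) set, i.e., for every g ∈ G the shift gA = {ga : a ∈ A} is not a set of measurable recurrence. Then A is not piecewise syndetic. -/

import Mathlib

open MeasureTheory

/-- A set `A` in a semigroup `G` is thick if for every finite `F ⊆ G`
there exists `g ∈ G` with `Fg ⊆ A`. -/
def Thick {G : Type*} [Semigroup G] (A : Set G) : Prop :=
  ∀ F : Finset G, ∃ g : G, ∀ f ∈ F, f * g ∈ A

/-- A set `A` in a semigroup `G` is piecewise syndetic if there is a finite
`H ⊆ G` such that `H⁻¹A = ⋃_{h ∈ H} h⁻¹A` is thick. -/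
def PiecewiseSyndetic {G : Type*} [Semigroup G] (A : Set G) : Prop :=
  ∃ H : Finset G, Thick {x : G | ∃ h ∈ H, h * x ∈ A}

/-- `A ⊆ G` is a set of measurable recurrence if for every measure-preserving
action of `G` on a probability space `(X, μ)` and every measurable `Y` with
`μ(Y) > 0` there is `g ∈ A`, `g ≠ 1`, with `μ(Y ∩ T_g⁻¹ Y) > 0`. -/
def IsRecurrenceSet {G : Type*} [Group G] (A : Set G) : Prop :=
  ∀ (X : Type) (_ : MeasurableSpace X) (μ : Measure X),
    IsProbabilityMeasure μ →
    ∀ T : G → X → X,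
      (∀ g h : G, T (g * h) = T g ∘ T h) →
      (∀ g : G, MeasurePreserving (T g) μ μ) →
      ∀ Y : Set X, MeasurableSet Y → 0 < μ Y →
        ∃ g ∈ A, g ≠ 1 ∧ 0 < μ (Y ∩ T g ⁻¹' Y)

open Pointwise in
/-- Thickness with avoidance of a finite set. -/
lemma thick_avoid {G : Type*} [Group G] [Infinite G] {B : Set G} (hB : Thick B)
    (F D : Finset G) : ∃ g : G, g ∉ D ∧ ∀ f ∈ F, f * g ∈ B := by
  classical
  obtain ⟨x, hx⟩ := Infinite.exists_notMem_finset (D * D⁻¹)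
  obtain ⟨g, hg⟩ := hB (F ∪ F.image (· * x))
  by_cases hgD : g ∈ D
  · refine ⟨x * g, fun hxg => hx ?_, fun f hf => ?_⟩
    · have : (x * g) * g⁻¹ ∈ D * D⁻¹ :=
        Finset.mul_mem_mul hxg (Finset.inv_mem_inv hgD)
      simpa [mul_assoc] using this
    · have := hg (f * x) (Finset.mem_union_right _ (Finset.mem_image_of_mem _ hf))
      simpa [mul_assoc] using this
  · exact ⟨g, hgD, fun f hf => hg f (Finset.mem_union_left _ hf)⟩

/-- A thick set contains all "upper quotients" of a suitable finite sequence. -/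
lemma thick_seq {G : Type*} [Group G] [Infinite G] {B : Set G} (hB : Thick B) (n : ℕ) :
    ∃ f : ℕ → G, ∀ i j, i < j → j < n →
      f i * (f j)⁻¹ ∈ B ∧ f i * (f j)⁻¹ ≠ 1 := by
  classical
  induction n with
  | zero => exact ⟨fun _ => 1, fun i j _ hj => absurd hj (Nat.not_lt_zero j)⟩
  | succ n ih =>
    obtain ⟨f, hf⟩ := ih
    obtain ⟨g, hgD, hgB⟩ := thick_avoid hB ((Finset.range n).image f)
      ((Finset.range n).image fun i => (f i)⁻¹)
    refine ⟨Function.update f n g⁻¹, fun i j hij hjn => ?_⟩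
    rcases Nat.lt_succ_iff_lt_or_eq.mp hjn with hj | rfl
    · have hi : i ≠ n := by omega
      have hjne : j ≠ n := by omega
      rw [Function.update_of_ne hi, Function.update_of_ne hjne]
      exact hf i j hij hj
    · rw [Function.update_of_ne hij.ne, Function.update_self, inv_inv]
      refine ⟨hgB _ (Finset.mem_image_of_mem f (Finset.mem_range.2 hij)), fun h => hgD ?_⟩
      have : g = (f i)⁻¹ := eq_inv_of_mul_eq_one_right h
      rw [this]
      exact Finset.mem_image_of_mem _ (Finset.mem_range.2 hij)

/-- The product of measure-preserving self-maps is measure preserving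
for the product measure. -/
lemma measurePreserving_piMap {ι : Type*} [Fintype ι] {X : ι → Type*}
    [∀ i, MeasurableSpace (X i)] (μ : ∀ i, Measure (X i)) [∀ i, SigmaFinite (μ i)]
    (f : ∀ i, X i → X i) (hf : ∀ i, MeasurePreserving (f i) (μ i) (μ i)) :
    MeasurePreserving (fun x i => f i (x i)) (Measure.pi μ) (Measure.pi μ) := by
  have hm : Measurable fun (x : ∀ i, X i) i => f i (x i) :=
    measurable_pi_lambda _ fun i => (hf i).measurable.comp (measurable_pi_apply i)
  refine ⟨hm, ?_⟩
  refine (Measure.pi_eq fun s hs => ?_).symm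
  rw [Measure.map_apply hm (MeasurableSet.univ_pi hs)]
  have hpre : (fun x i => f i (x i)) ⁻¹' Set.pi Set.univ s
      = Set.pi Set.univ fun i => f i ⁻¹' s i := by
    ext x; simp [Set.mem_pi]
  rw [hpre, Measure.pi_pi]
  exact Finset.prod_congr rfl fun i _ => (hf i).measure_preimage (hs i).nullMeasurableSet

/-- If `A` is an anti-recurrence set (no shift `gA` is a set of measurable
recurrence), then `A` is not piecewise syndetic. -/
theorem ar_not_piecewiseSyndetic {G : Type*} [Group G] [Countable G] [Infinite G]
    (A : Set G) (hAR : ∀ g : G, ¬ IsRecurrenceSet ((fun a => g * a) '' A)) :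
    ¬ PiecewiseSyndetic A := by
  classical
  rintro ⟨H, hthick⟩
  -- extract witnessing systems for every `h`
  have key : ∀ h : G, ∃ (X : Type) (m : MeasurableSpace X) (μ : Measure X)
      (T : G → X → X) (Y : Set X), IsProbabilityMeasure μ ∧
      (∀ g k : G, T (g * k) = T g ∘ T k) ∧ (∀ g : G, MeasurePreserving (T g) μ μ) ∧
      MeasurableSet Y ∧ 0 < μ Y ∧
      ∀ x : G, h * x ∈ A → x ≠ 1 → μ (Y ∩ T x ⁻¹' Y) = 0 := by
    intro h
    have := hAR h⁻¹
    unfold IsRecurrenceSet at this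
    push_neg at this
    obtain ⟨X, m, μ, hprob, T, hhom, hmp, Y, hYm, hYpos, hrec⟩ := this
    refine ⟨X, m, μ, T, Y, hprob, hhom, hmp, hYm, hYpos, fun x hxA hx1 => ?_⟩
    have hxmem : x ∈ (fun a => h⁻¹ * a) '' A := ⟨h * x, hxA, by group⟩
    exact le_zero_iff.mp (hrec x hxmem hx1)
  choose X mX μ T Y hprob hhom hmp hYm hYpos hzero using key
  -- the product system over `H`
  haveI : ∀ h : ↥H, IsProbabilityMeasure (μ h.1) := fun h => hprob h.1
  set μP : Measure (∀ h : ↥H, X h.1) := Measure.pi (fun h : ↥H => μ h.1) with hμP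
  haveI : IsProbabilityMeasure μP := Measure.pi.instIsProbabilityMeasure _
  set TP : G → (∀ h : ↥H, X h.1) → (∀ h : ↥H, X h.1) :=
    fun g x h => T h.1 g (x h) with hTP
  have hhomP : ∀ g k : G, TP (g * k) = TP g ∘ TP k := by
    intro g k; funext x; funext h
    simp only [hTP, Function.comp_apply, hhom h.1 g k]
  have hmpP : ∀ g : G, MeasurePreserving (TP g) μP μP :=
    fun g => measurePreserving_piMap _ _ fun h => hmp h.1 g
  set YP : Set (∀ h : ↥H, X h.1) := Set.univ.pi fun h => Y h.1 with hYP
  have hYPm : MeasurableSet YP := MeasurableSet.univ_pi fun h => hYm h.1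
  have hYPpos : 0 < μP YP := by
    rw [hμP, hYP, Measure.pi_pi]
    exact CanonicallyOrderedAdd.prod_pos.mpr fun h _ => hYpos h.1
  have hne0 : μP YP ≠ 0 := hYPpos.ne'
  have hnetop : μP YP ≠ ⊤ := measure_ne_top _ _
  -- vanishing of correlations along `B \ {1}`
  have hvanish : ∀ x : G, (∃ h ∈ H, h * x ∈ A) → x ≠ 1 →
      μP (YP ∩ TP x ⁻¹' YP) = 0 := by
    rintro x ⟨h, hh, hhx⟩ hx1
    have hsplit : YP ∩ TP x ⁻¹' YP
        = Set.univ.pi fun k : ↥H => Y k.1 ∩ T k.1 x ⁻¹' Y k.1 := by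
      ext z
      simp only [hYP, hTP, Set.mem_inter_iff, Set.mem_pi, Set.mem_univ, true_implies,
        Set.mem_preimage]
      exact ⟨fun q k => ⟨q.1 k, q.2 k⟩, fun q => ⟨fun k => (q k).1, fun k => (q k).2⟩⟩
    rw [hsplit, hμP, Measure.pi_pi]
    exact Finset.prod_eq_zero (Finset.mem_univ (⟨h, hh⟩ : ↥H)) (hzero h x hhx hx1)
  -- Poincaré-style pigeonhole
  obtain ⟨n, hn⟩ := ENNReal.exists_nat_gt (ENNReal.inv_ne_top.2 hne0)
  obtain ⟨f, hf⟩ := thick_seq hthick n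
  set E : ℕ → Set (∀ h : ↥H, X h.1) := fun i => TP (f i) ⁻¹' YP with hE
  have hEmeas : ∀ i, MeasurableSet (E i) := fun i => (hmpP (f i)).measurable hYPm
  have hEμ : ∀ i, μP (E i) = μP YP := fun i =>
    (hmpP (f i)).measure_preimage hYPm.nullMeasurableSet
  have hpair : ∀ i j, i < j → j < n → μP (E i ∩ E j) = 0 := by
    intro i j hij hjn
    obtain ⟨hxB, hx1⟩ := hf i j hij hjn
    set x := f i * (f j)⁻¹ with hx
    have hcomp : TP (f i) = TP x ∘ TP (f j) := by
      have hxj : x * f j = f i := by rw [hx]; group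
      rw [← hhomP, hxj]
    have hinter : E i ∩ E j = TP (f j) ⁻¹' (TP x ⁻¹' YP ∩ YP) := by
      rw [hE]
      simp only [hcomp, Set.preimage_comp, Set.preimage_inter]
    rw [hinter, (hmpP (f j)).measure_preimage
      (((hmpP x).measurable hYPm).inter hYPm).nullMeasurableSet, Set.inter_comm]
    exact hvanish x hxB hx1
  have hdisj : (↑(Finset.range n) : Set ℕ).Pairwise (Function.onFun (AEDisjoint μP) E) := by
    intro i hi j hj hij
    rcases lt_or_gt_of_ne hij with h | h
    · exact hpair i j h (Finset.mem_range.mp (Finset.mem_coe.mp hj))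
    · have := hpair j i h (Finset.mem_range.mp (Finset.mem_coe.mp hi))
      rwa [Set.inter_comm] at this
  have hunion : μP (⋃ i ∈ Finset.range n, E i) = n * μP YP := by
    rw [measure_biUnion_finset₀ hdisj fun i _ => (hEmeas i).nullMeasurableSet,
      Finset.sum_congr rfl fun i _ => hEμ i, Finset.sum_const, Finset.card_range,
      nsmul_eq_mul]
  have hle : μP (⋃ i ∈ Finset.range n, E i) ≤ 1 := by
    rw [← measure_univ (μ := μP)]
    exact measure_mono (Set.subset_univ _)
  have hgt : (1 : ENNReal) < n * μP YP := by
    calc (1 : ENNReal) = (μP YP)⁻¹ * μP YP := (ENNReal.inv_mul_cancel hne0 hnetop).symm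
      _ < n * μP YP := ENNReal.mul_lt_mul_left hne0 hnetop hn
  rw [hunion] at hle
  exact absurd hle (not_le.mpr hgt)
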